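/- Let f : ℂ → ℂ be continuous on an open set U ⊆ ℂ and complex differentiable at every point of U \ X, where X ⊆ U is a compact countable set with exactly one accumulation point w, and w ∈ X. If △(z₁, z₂, z₃) is a triangle contained in U and w = z₁ is a vertex of the triangle, then the integral of f along the closed polygonal path [z₁, z₂, z₃, z₁] equals 0. -/

import Mathlib

open Set Metric intervalIntegral

/-- The complex line integral of `f` along the segment from `a` to `b`:
`∫_{t ∈ [0,1]} f((1-t)·a + t·b) · (b - a) dt`. -/
noncomputable def segmentIntegral (f : ℂ → ℂ) (a b : ℂ) : ℂ :=
  ∫ t in (0:ℝ)..1, f ((1 - t) • a + t • b) * (b - a)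

/-- The integral of `f` along the closed polygonal path `[z₁, z₂, z₃, z₁]`. -/
noncomputable def triangleIntegral (f : ℂ → ℂ) (z₁ z₂ z₃ : ℂ) : ℂ :=
  segmentIntegral f z₁ z₂ + segmentIntegral f z₂ z₃ + segmentIntegral f z₃ z₁

/-- `w` is an accumulation point of `X`: every neighborhood of `w` contains a
point of `X` other than `w`. -/
def IsAccumulationPoint (w : ℂ) (X : Set ℂ) : Prop :=
  ∀ V ∈ nhds w, ∃ x, x ∈ V ∩ X ∧ x ≠ w

lemma gamma_hasDerivAt (c z : ℂ) (t : ℝ) :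
    HasDerivAt (fun s : ℝ => (1 - s) • c + s • z) (z - c) t := by
  have h : (fun s : ℝ => (1 - s) • c + s • z) = fun s : ℝ => c + s • (z - c) := by
    funext s; module
  rw [h]
  simpa using ((hasDerivAt_id t).smul_const (z - c)).const_add c

lemma gammaz_hasDerivAt (c : ℂ) (t : ℝ) (z : ℂ) :
    HasDerivAt (fun y : ℂ => (1 - t) • c + t • y) ((t : ℂ)) z := by
  have h : (fun y : ℂ => (1 - t) • c + t • y) = fun y : ℂ => ((1 - t : ℝ) : ℂ) * c + (t : ℂ) * y := by
    funext y; rw [Complex.real_smul, Complex.real_smul]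
  rw [h]
  simpa using ((hasDerivAt_id z).const_mul (t : ℂ)).const_add (((1 - t : ℝ) : ℂ) * c)

lemma combo_mem {V : Set ℂ} (hVc : Convex ℝ V) {a b : ℂ} (ha : a ∈ V) (hb : b ∈ V)
    {t : ℝ} (ht : t ∈ Icc (0:ℝ) 1) : (1 - t) • a + t • b ∈ V :=
  hVc ha hb (by linarith [ht.2]) ht.1 (by ring)

lemma key {f f' : ℂ → ℂ} {V : Set ℂ} (hV : IsOpen V) (hVc : Convex ℝ V)
    (hfd : ∀ z ∈ V, HasDerivAt f (f' z) z) (hf'c : ContinuousOn f' V)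
    {c : ℂ} (hc : c ∈ V) {z₀ : ℂ} (hz₀ : z₀ ∈ V) :
    HasDerivAt (fun z => segmentIntegral f c z) (f z₀) z₀ := by
  have hfc : ContinuousOn f V := fun z hz => (hfd z hz).continuousAt.continuousWithinAt
  obtain ⟨ε, hε, hball⟩ : ∃ ε > 0, closedBall z₀ ε ⊆ V :=
    (nhds_basis_closedBall.mem_iff).1 (hV.mem_nhds hz₀)
  set γ : ℂ → ℝ → ℂ := fun z t => (1 - t) • c + t • z with hγ
  set F : ℂ → ℝ → ℂ := fun z t => f (γ z t) * (z - c) with hF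
  set F' : ℂ → ℝ → ℂ := fun z t => (f' (γ z t) * (t : ℂ)) * (z - c) + f (γ z t) * 1 with hF'
  -- the compact set of relevant points
  set K : Set ℂ := (fun p : ℝ × ℂ => (1 - p.1) • c + p.1 • p.2) '' (Icc 0 1 ×ˢ closedBall z₀ ε)
    with hK
  have hKcomp : IsCompact K := by
    apply (isCompact_Icc.prod (isCompact_closedBall z₀ ε)).image
    fun_prop
  have hKV : K ⊆ V := by
    rintro _ ⟨⟨t, z⟩, ⟨ht, hz⟩, rfl⟩
    exact combo_mem hVc hc (hball hz) ht
  have hmemK : ∀ z ∈ closedBall z₀ ε, ∀ t ∈ Icc (0:ℝ) 1, γ z t ∈ K := by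
    intro z hz t ht
    exact ⟨(t, z), ⟨ht, hz⟩, rfl⟩
  obtain ⟨C, hC⟩ := hKcomp.exists_bound_of_continuousOn (hfc.mono hKV)
  obtain ⟨C', hC'⟩ := hKcomp.exists_bound_of_continuousOn (hf'c.mono hKV)
  have hγcont : ∀ z : ℂ, Continuous (γ z) := by intro z; simp only [hγ]; fun_prop
  have hFcont : ∀ z ∈ closedBall z₀ ε, ContinuousOn (F z) (Icc (0:ℝ) 1) := by
    intro z hz
    apply ContinuousOn.mul _ continuousOn_const
    exact (hfc.mono hKV).comp (hγcont z).continuousOn (fun t ht => hmemK z hz t ht)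
  have hz₀ball : z₀ ∈ closedBall z₀ ε := mem_closedBall_self hε.le
  have hsub : uIoc (0:ℝ) 1 ⊆ Icc (0:ℝ) 1 := by
    rw [uIoc_of_le (by norm_num : (0:ℝ) ≤ 1)]; exact Ioc_subset_Icc_self
  set B : ℝ := C' * (ε + ‖z₀ - c‖) + C with hB
  have hmain := intervalIntegral.hasDerivAt_integral_of_dominated_loc_of_deriv_le
    (F := F) (F' := F') (x₀ := z₀) (bound := fun _ => B) (a := 0) (b := 1)
    (μ := MeasureTheory.volume) (ball_mem_nhds z₀ hε)
    (by -- hF_meas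
      filter_upwards [ball_mem_nhds z₀ hε] with z hz
      exact (ContinuousOn.mono (hFcont z (ball_subset_closedBall hz)) hsub).aestronglyMeasurable
        measurableSet_uIoc)
    (by -- hF_int
      apply ContinuousOn.intervalIntegrable
      rw [uIcc_of_le (by norm_num : (0:ℝ) ≤ 1)]
      exact hFcont z₀ hz₀ball)
    (by -- hF'_meas
      apply ContinuousOn.aestronglyMeasurable _ measurableSet_uIoc
      apply ContinuousOn.mono _ hsub
      have hcf' : ContinuousOn (fun t => f' (γ z₀ t)) (Icc (0:ℝ) 1) :=
        (hf'c.mono hKV).comp (hγcont z₀).continuousOn (fun t ht => hmemK z₀ hz₀ball t ht)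
      have hcf : ContinuousOn (fun t => f (γ z₀ t)) (Icc (0:ℝ) 1) :=
        (hfc.mono hKV).comp (hγcont z₀).continuousOn (fun t ht => hmemK z₀ hz₀ball t ht)
      exact ((hcf'.mul (by fun_prop)).mul continuousOn_const).add (hcf.mul continuousOn_const))
    (by -- h_bound
      apply MeasureTheory.ae_of_all
      intro t ht z hz
      have htIcc : t ∈ Icc (0:ℝ) 1 := hsub ht
      have hzK : γ z t ∈ K := hmemK z (ball_subset_closedBall hz) t htIcc
      have h1 : ‖f' (γ z t)‖ ≤ C' := hC' _ hzK
      have h2 : ‖f (γ z t)‖ ≤ C := hC _ hzK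
      have h3 : |t| ≤ 1 := abs_le.2 ⟨by linarith [htIcc.1], htIcc.2⟩
      have h4 : ‖z - c‖ ≤ ε + ‖z₀ - c‖ := by
        have : ‖z - c‖ ≤ ‖z - z₀‖ + ‖z₀ - c‖ := by
          simpa using norm_add_le (z - z₀) (z₀ - c)
        have hzz : ‖z - z₀‖ ≤ ε := by
          rw [← dist_eq_norm]; exact (mem_ball.1 hz).le
        linarith
      have h0  : (0:ℝ) ≤ ‖f' (γ z t)‖ := norm_nonneg _
      have h0' : (0:ℝ) ≤ ‖z - c‖ := norm_nonneg _
      have h0'' : (0:ℝ) ≤ |t| := abs_nonneg _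
      calc ‖F' z t‖ ≤ ‖(f' (γ z t) * (t : ℂ)) * (z - c)‖ + ‖f (γ z t) * 1‖ := norm_add_le _ _
        _ = ‖f' (γ z t)‖ * |t| * ‖z - c‖ + ‖f (γ z t)‖ := by
            simp [norm_mul, Complex.norm_real]
        _ ≤ B := by
            rw [hB]
            have h5 : ‖f' (γ z t)‖ * |t| ≤ C' :=
              le_trans (mul_le_of_le_one_right h0 h3) h1
            have h6 : ‖f' (γ z t)‖ * |t| * ‖z - c‖ ≤ C' * (ε + ‖z₀ - c‖) :=
              mul_le_mul h5 h4 h0' (le_trans h0 h1)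
            linarith)
    (by exact intervalIntegrable_const)
    (by -- h_diff
      apply MeasureTheory.ae_of_all
      intro t ht z hz
      have htIcc : t ∈ Icc (0:ℝ) 1 := hsub ht
      have hzV : γ z t ∈ V := hKV (hmemK z (ball_subset_closedBall hz) t htIcc)
      have h1 : HasDerivAt (fun y : ℂ => γ y t) ((t:ℂ)) z := gammaz_hasDerivAt c t z
      have h2 : HasDerivAt f (f' (γ z t)) (γ z t) := hfd _ hzV
      have h3 : HasDerivAt (fun y : ℂ => f (γ y t)) (f' (γ z t) * (t:ℂ)) z := by
        exact h2.comp z h1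
      exact h3.mul ((hasDerivAt_id' z).sub_const c))
  have hG : ∀ t ∈ uIcc (0:ℝ) 1, HasDerivAt (fun s : ℝ => (s : ℂ) * f (γ z₀ s)) (F' z₀ t) t := by
    intro t ht
    rw [uIcc_of_le (by norm_num : (0:ℝ) ≤ 1)] at ht
    have hmem : γ z₀ t ∈ V := hVc hc hz₀ (by linarith [ht.2]) ht.1 (by ring)
    have hγd : HasDerivAt (γ z₀) (z₀ - c) t := gamma_hasDerivAt c z₀ t
    have hfγ : HasDerivAt (fun s : ℝ => f (γ z₀ s)) ((z₀ - c) • f' (γ z₀ t)) t :=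
      (hfd _ hmem).scomp t hγd
    have hu : HasDerivAt (fun s : ℝ => (s : ℂ)) 1 t := by
      exact (Complex.ofRealCLM.hasDerivAt (x := t)).congr_deriv (by simp)
    have : HasDerivAt (fun s : ℝ => (s : ℂ) * f (γ z₀ s)) _ t := hu.mul hfγ
    convert this using 1
    simp only [F', smul_eq_mul]
    ring
  have hInt : (∫ t in (0:ℝ)..1, F' z₀ t) = f z₀ := by
    rw [intervalIntegral.integral_eq_sub_of_hasDerivAt hG hmain.1]
    simp [γ]
  have hfin := hmain.2
  rw [hInt] at hfin
  simpa [segmentIntegral, F, γ] using hfin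

lemma seg_eq {f F : ℂ → ℂ} {V : Set ℂ} (hVc : Convex ℝ V) (hf : ContinuousOn f V)
    (hF : ∀ z ∈ V, HasDerivAt F (f z) z) {a b : ℂ} (ha : a ∈ V) (hb : b ∈ V) :
    segmentIntegral f a b = F b - F a := by
  have hmem : ∀ t ∈ uIcc (0:ℝ) 1, (1 - t) • a + t • b ∈ V := by
    intro t ht
    rw [uIcc_of_le (by norm_num : (0:ℝ) ≤ 1)] at ht
    exact hVc ha hb (by linarith [ht.2]) ht.1 (by ring)
  have hG : ∀ t ∈ uIcc (0:ℝ) 1,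
      HasDerivAt (fun s : ℝ => F ((1 - s) • a + s • b))
        (f ((1 - t) • a + t • b) * (b - a)) t := by
    intro t ht
    have := (hF _ (hmem t ht)).scomp t (gamma_hasDerivAt a b t)
    simpa [Function.comp_def, smul_eq_mul, mul_comm] using this
  have hint : IntervalIntegrable (fun t => f ((1 - t) • a + t • b) * (b - a))
      MeasureTheory.volume 0 1 := by
    apply ContinuousOn.intervalIntegrable
    apply ContinuousOn.mul _ continuousOn_const
    exact hf.comp (by fun_prop) hmem
  have := intervalIntegral.integral_eq_sub_of_hasDerivAt hG hint
  simpa [segmentIntegral] using this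

theorem stmt_5 (f : ℂ → ℂ) (U : Set ℂ) (hU : IsOpen U)
    (hf : ContinuousOn f U) (X : Set ℂ) (hXU : X ⊆ U)
    (hXcomp : IsCompact X) (hXcount : X.Countable)
    (w : ℂ) (hacc : {p | IsAccumulationPoint p X} = {w}) (hwX : w ∈ X)
    (z₁ z₂ z₃ : ℂ) (htri : convexHull ℝ {z₁, z₂, z₃} ⊆ U)
    (hd : ∀ z ∈ U \ X, DifferentiableAt ℂ f z)
    (hvert : w = z₁) :
    triangleIntegral f z₁ z₂ z₃ = 0 := by
  -- f is differentiable everywhere on U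
  have hdiff : ∀ z ∈ U, DifferentiableAt ℂ f z := by
    intro z hz
    obtain ⟨r, hr0, hrU⟩ : ∃ r > 0, closedBall z r ⊆ U :=
      (nhds_basis_closedBall.mem_iff).1 (hU.mem_nhds hz)
    have hball : ∀ y ∈ ball z r \ X, DifferentiableAt ℂ f y := fun y hy =>
      hd y ⟨hrU (ball_subset_closedBall hy.1), hy.2⟩
    have := Complex.hasFPowerSeriesOnBall_of_differentiable_off_countable
      (R := ⟨r, hr0.le⟩) (c := z) hXcount (hf.mono hrU) hball hr0
    exact this.analyticAt.differentiableAt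
  -- a convex open neighborhood of the triangle
  set T : Set ℂ := convexHull ℝ {z₁, z₂, z₃} with hT
  have hTcomp : IsCompact T := (((Set.finite_singleton z₃).insert z₂).insert z₁).isCompact_convexHull (𝕜 := ℝ)
  obtain ⟨δ, hδ0, hδU⟩ := hTcomp.exists_thickening_subset_open hU htri
  set V : Set ℂ := Metric.thickening δ T with hV
  have hVopen : IsOpen V := Metric.isOpen_thickening
  have hVconv : Convex ℝ V := (convex_convexHull ℝ _).thickening δ
  have hVU : V ⊆ U := hδU
  have hTV : T ⊆ V := Metric.self_subset_thickening hδ0 T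
  have h1 : z₁ ∈ V := hTV (subset_convexHull ℝ _ (by simp))
  have h2 : z₂ ∈ V := hTV (subset_convexHull ℝ _ (by simp))
  have h3 : z₃ ∈ V := hTV (subset_convexHull ℝ _ (by simp))
  -- f is analytic on V with continuous derivative
  have hVdiff : ∀ z ∈ V, HasDerivAt f (deriv f z) z := fun z hz =>
    (hdiff z (hVU hz)).hasDerivAt
  have hAn : AnalyticOnNhd ℂ f V :=
    DifferentiableOn.analyticOnNhd
      (fun z hz => (hdiff z (hVU hz)).differentiableWithinAt) hVopen
  have hderivC : ContinuousOn (deriv f) V := hAn.deriv.continuousOn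
  -- the primitive
  set F : ℂ → ℂ := fun z => segmentIntegral f z₁ z with hFdef
  have hFD : ∀ z ∈ V, HasDerivAt F (f z) z := fun z hz =>
    key hVopen hVconv hVdiff hderivC h1 hz
  have hfV : ContinuousOn f V := hf.mono hVU
  rw [triangleIntegral, seg_eq hVconv hfV hFD h1 h2, seg_eq hVconv hfV hFD h2 h3,
    seg_eq hVconv hfV hFD h3 h1]
  ring
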